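/- Let p and q be distinct primes congruent to 1 mod 4 with Legendre symbol (p/q) = -1. Then the Pell-type equation x^2 - pq*y^2 = -1 has a solution in integers x, y. -/

import Mathlib

lemma aux_sq (q : ℕ) [Fact q.Prime] (a : ZMod q) (u : ZMod q) (c : ZMod q)
    (hc : IsSquare c) (hu : u ≠ 0) (h : a * u ^ 2 = c) : IsSquare a := by
  obtain ⟨i, hi⟩ := hc
  refine ⟨i * u⁻¹, ?_⟩
  have h2 : a = c * (u⁻¹) ^ 2 := by
    rw [← h]
    field_simp
  rw [h2, hi]; ring

lemma not_sq (p q : ℕ) (hp : p.Prime) (hq : q.Prime) (hpq : p ≠ q) :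
    ¬ IsSquare ((p * q : ℕ) : ℤ) := by
  rintro ⟨r, hr⟩
  have h1 : IsSquare (p * q) := by
    refine ⟨r.natAbs, ?_⟩
    have h2 : ((p * q : ℕ) : ℤ) = ((r.natAbs * r.natAbs : ℕ) : ℤ) := by
      push_cast
      rw [abs_mul_abs_self]
      exact_mod_cast hr
    exact_mod_cast h2
  obtain ⟨r, hr⟩ := h1
  have hpr : p ∣ r := hp.dvd_of_dvd_pow (n := 2) (by rw [sq, ← hr]; exact ⟨q, rfl⟩)
  obtain ⟨s, rfl⟩ := hpr
  have hq' : q = p * (s * s) := Nat.eq_of_mul_eq_mul_left hp.pos (by rw [hr]; ring)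
  exact hpq ((Nat.prime_dvd_prime_iff_eq hp hq).mp ⟨s * s, hq'⟩)

lemma sq_of_coprime_pos {a b c : ℤ} (h : IsCoprime a b) (heq : a * b = c ^ 2)
    (ha : 0 < a) : ∃ u : ℤ, a = u ^ 2 := by
  obtain ⟨u, hu | hu⟩ := Int.sq_of_isCoprime h heq
  · exact ⟨u, hu⟩
  · exfalso; nlinarith [sq_nonneg u]

lemma pos_factor {p a : ℤ} (hp : 0 < p) (h : 0 < p * a) : 0 < a := by
  by_contra h'
  push_neg at h'
  nlinarith

set_option maxHeartbeats 1000000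

theorem pell_neg_one_of_legendre_neg_one (p q : ℕ) [Fact p.Prime] [Fact q.Prime]
    (hp4 : p % 4 = 1) (hq4 : q % 4 = 1) (hpq : p ≠ q)
    (hleg : legendreSym q p = -1) :
    ∃ x y : ℤ, x ^ 2 - (p * q : ℤ) * y ^ 2 = -1 := by
  classical
  have hp := Fact.out (p := p.Prime)
  have hq := Fact.out (p := q.Prime)
  have hpZ : Prime (p : ℤ) := Nat.prime_iff_prime_int.mp hp
  have hqZ : Prime (q : ℤ) := Nat.prime_iff_prime_int.mp hq
  have hp5 : 5 ≤ p := by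
    have h2 := hp.two_le
    rcases Nat.lt_or_ge p 5 with h | h
    · interval_cases p <;> omega
    · exact h
  have hq5 : 5 ≤ q := by
    have h2 := hq.two_le
    rcases Nat.lt_or_ge q 5 with h | h
    · interval_cases q <;> omega
    · exact h
  set N : ℤ := (p * q : ℤ) with hNdef
  have hN25 : (25 : ℤ) ≤ N := by
    have h1 : (25 : ℕ) ≤ p * q := le_trans (by norm_num) (Nat.mul_le_mul hp5 hq5)
    rw [hNdef]; exact_mod_cast h1
  have hN0 : 0 < N := by linarith
  have hNsq : ¬ IsSquare N := by
    have h := not_sq p q hp hq hpq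
    rw [hNdef]
    push_cast at h ⊢
    exact h
  -- existence of a nontrivial solution to the +1 Pell equation
  obtain ⟨x₀, y₀, he₀, hy₀⟩ := Pell.exists_of_not_isSquare hN0 hNsq
  set P : ℕ → Prop := fun n => 1 < n ∧ ∃ y : ℤ, 0 < y ∧ (n : ℤ) ^ 2 - N * y ^ 2 = 1
    with hPdef
  have hPex : ∃ n, P n := by
    have hy2 : 1 ≤ y₀ ^ 2 := by
      have h0 : 0 < y₀ ^ 2 := by positivity
      omega
    have h26 : (26 : ℤ) ≤ (x₀.natAbs : ℤ) ^ 2 := by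
      rw [Int.natAbs_sq x₀]; nlinarith
    refine ⟨x₀.natAbs, ?_, |y₀|, ?_, ?_⟩
    · have h2 : (2 : ℤ) ≤ (x₀.natAbs : ℤ) := by
        nlinarith [Int.natCast_nonneg x₀.natAbs]
      exact_mod_cast lt_of_lt_of_le (by norm_num : (1:ℤ) < 2) h2
    · exact abs_pos.mpr hy₀
    · rw [Int.natAbs_sq x₀, sq_abs]; exact he₀
  -- minimal solution
  set m := Nat.find hPex with hmdef
  obtain ⟨hm1, y, hy0, hxy⟩ := Nat.find_spec hPex
  rw [← hmdef] at hm1 hxy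
  -- mod-4 facts
  have hp4' : ((p : ℕ) : ZMod 4) = 1 := by
    rw [← ZMod.natCast_mod p 4, hp4, Nat.cast_one]
  have hq4' : ((q : ℕ) : ZMod 4) = 1 := by
    rw [← ZMod.natCast_mod q 4, hq4, Nat.cast_one]
  -- x := (m : ℤ) is odd
  rcases Int.even_or_odd (m : ℤ) with ⟨t, ht⟩ | ⟨k, hk⟩
  · exfalso
    rw [hNdef, ht] at hxy
    have hc := congrArg (fun z : ℤ => (z : ZMod 4)) hxy
    push_cast at hc
    rw [hp4', hq4'] at hc
    simp only [one_mul] at hc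
    generalize ((t : ℤ) : ZMod 4) = a at hc
    generalize ((y : ℤ) : ZMod 4) = b at hc
    revert hc
    revert a b
    decide
  · -- odd case : ↑m = 2k+1
    have hx1 : (1 : ℤ) < (m : ℤ) := by exact_mod_cast hm1
    have hk1 : 1 ≤ k := by omega
    rw [hk] at hxy
    have hNy : N * y ^ 2 = 4 * k ^ 2 + 4 * k := by linear_combination -hxy
    -- y is even
    have h2 : Prime (2 : ℤ) := Int.prime_two
    have h2N : ¬ (2 : ℤ) ∣ N := by
      rw [hNdef]
      intro hdvd
      rcases h2.dvd_mul.mp hdvd with h | h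
      · have : 2 ∣ p := by exact_mod_cast h
        omega
      · have : 2 ∣ q := by exact_mod_cast h
        omega
    have h2y : (2 : ℤ) ∣ y := by
      have hdvd : (2 : ℤ) ∣ N * y ^ 2 := ⟨2 * k ^ 2 + 2 * k, by linarith⟩
      rcases h2.dvd_mul.mp hdvd with h | h
      · exact absurd h h2N
      · exact h2.dvd_of_dvd_pow h
    obtain ⟨y', hy'⟩ := h2y
    have hy'0 : 0 < y' := by omega
    rw [hy'] at hNy
    have hkk : k * (k + 1) = N * y' ^ 2 := by
      have h4 : (4 : ℤ) * (k * (k + 1)) = 4 * (N * y' ^ 2) := by linear_combination -hNy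
      exact mul_left_cancel₀ (by norm_num : (4:ℤ) ≠ 0) h4
    have hkco : IsCoprime k (k + 1) := ⟨-1, 1, by ring⟩
    have hk0 : (0 : ℤ) < k := by omega
    have hk10 : (0 : ℤ) < k + 1 := by omega
    have hp0 : (0 : ℤ) < (p : ℤ) := by exact_mod_cast hp.pos
    have hq0 : (0 : ℤ) < (q : ℤ) := by exact_mod_cast hq.pos
    have hpdvd : (p : ℤ) ∣ k * (k + 1) := by
      rw [hkk, hNdef]; exact ⟨(q : ℤ) * y' ^ 2, by ring⟩
    have hqdvd : (q : ℤ) ∣ k * (k + 1) := by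
      rw [hkk, hNdef]; exact ⟨(p : ℤ) * y' ^ 2, by ring⟩
    have hpqco : IsCoprime (p : ℤ) (q : ℤ) := by
      rw [Int.isCoprime_iff_gcd_eq_one]
      exact_mod_cast (Nat.coprime_primes hp hq).mpr hpq
    -- the contradiction via the Legendre symbol (shared by the two mixed cases)
    have hlegcon : ∀ u : ℤ, ((u : ZMod q) ≠ 0) → ∀ c : ZMod q, IsSquare c →
        ((p : ℕ) : ZMod q) * (u : ZMod q) ^ 2 = c → False := by
      intro u hu c hc hpc
      have hsq : IsSquare ((p : ℕ) : ZMod q) := aux_sq q _ _ _ hc hu hpc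
      have hp0' : ((p : ℕ) : ZMod q) ≠ 0 := by
        rw [Ne, ZMod.natCast_eq_zero_iff]
        intro hdvd
        exact hpq ((Nat.prime_dvd_prime_iff_eq hq hp).mp hdvd).symm
      have h1 := (legendreSym.eq_one_iff' q hp0').mpr hsq
      rw [hleg] at h1
      norm_num at h1
    rcases hpZ.dvd_mul.mp hpdvd with hpk | hpk <;>
      rcases hqZ.dvd_mul.mp hqdvd with hqk | hqk
    · -- p ∣ k and q ∣ k : smaller solution, contradicting minimality
      exfalso
      have hNk : N ∣ k := by rw [hNdef]; exact hpqco.mul_dvd hpk hqk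
      obtain ⟨a, ha⟩ := hNk
      have hab : a * (k + 1) = y' ^ 2 := by
        have h4 : N * (a * (k + 1)) = N * y' ^ 2 := by rw [← hkk, ha]; ring
        exact mul_left_cancel₀ (by linarith) h4
      have ha0 : 0 < a := pos_factor hN0 (by rw [← ha]; exact hk0)
      have habco : IsCoprime a (k + 1) :=
        hkco.of_isCoprime_of_dvd_left ⟨N, by rw [ha]; ring⟩
      obtain ⟨u, hu⟩ := sq_of_coprime_pos habco hab ha0
      obtain ⟨v, hv⟩ := sq_of_coprime_pos habco.symm (by rw [mul_comm]; exact hab) hk10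
      -- v^2 - N u^2 = 1 with |v| < m
      have hveq : v ^ 2 - N * u ^ 2 = 1 := by
        rw [← hv, ← hu, ← ha]; ring
      have hu0 : u ≠ 0 := by
        intro h0
        rw [h0] at hu
        simp at hu
        omega
      set w := v.natAbs with hwdef
      have hw2 : (w : ℤ) ^ 2 = v ^ 2 := Int.natAbs_sq v
      have hwlt : w < m := by
        have hv2 : (w : ℤ) ^ 2 < (m : ℤ) := by
          rw [hw2, ← hv, hk]; omega
        have hwm : (w : ℤ) < (m : ℤ) := by nlinarith [Int.natCast_nonneg w]
        exact_mod_cast hwm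
      have hw1 : 1 < w := by
        have h26 : (26 : ℤ) ≤ (w : ℤ) ^ 2 := by
          have hu2 : 1 ≤ u ^ 2 := by
            have : 0 < u ^ 2 := by positivity
            omega
          rw [hw2, ← hv]
          nlinarith
        by_contra h
        push_neg at h
        interval_cases w <;> norm_num at h26
      have := Nat.find_min hPex (hmdef ▸ hwlt)
      exact this ⟨hw1, |u|, abs_pos.mpr hu0, by rw [hw2, sq_abs]; exact hveq⟩
    · -- p ∣ k and q ∣ k + 1 : Legendre contradiction
      exfalso
      obtain ⟨a, ha⟩ := hpk
      obtain ⟨b, hb⟩ := hqk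
      have hab : a * b = y' ^ 2 := by
        have h4 : ((p : ℤ) * q) * (a * b) = ((p : ℤ) * q) * y' ^ 2 := by
          rw [hNdef] at hkk
          rw [← hkk, hb, ha]; ring
        exact mul_left_cancel₀ (by positivity) h4
      have ha0 : 0 < a := pos_factor hp0 (by rw [← ha]; exact hk0)
      have hb0 : 0 < b := pos_factor hq0 (by rw [← hb]; exact hk10)
      have habco : IsCoprime a b :=
        (hkco.of_isCoprime_of_dvd_left ⟨(p : ℤ), by rw [ha]; ring⟩).of_isCoprime_of_dvd_right
          ⟨(q : ℤ), by rw [hb]; ring⟩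
      obtain ⟨u, hu⟩ := sq_of_coprime_pos habco hab ha0
      obtain ⟨v, hv⟩ := sq_of_coprime_pos habco.symm (by rw [mul_comm]; exact hab) hb0
      -- q v^2 - p u^2 = 1
      have heq1 : (q : ℤ) * v ^ 2 - (p : ℤ) * u ^ 2 = 1 := by
        rw [← hv, ← hu, ← hb, ← ha]; ring
      have hc := congrArg (fun z : ℤ => (z : ZMod q)) heq1
      push_cast at hc
      rw [ZMod.natCast_self] at hc
      have hpc : ((p : ℕ) : ZMod q) * ((u : ℤ) : ZMod q) ^ 2 = -1 := by
        linear_combination -hc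
      have hu0 : ((u : ℤ) : ZMod q) ≠ 0 := by
        rw [Ne, ZMod.intCast_zmod_eq_zero_iff_dvd]
        intro hdvd
        have h1 : (q : ℤ) ∣ k := by
          rw [ha, hu]
          exact ((dvd_pow hdvd two_ne_zero).mul_left _)
        have h2 : (q : ℤ) ∣ 1 := by simpa using dvd_sub ⟨b, hb⟩ h1
        have h3 := Int.le_of_dvd one_pos h2
        omega
      exact hlegcon u hu0 (-1) (ZMod.exists_sq_eq_neg_one_iff.mpr (by omega)) hpc
    · -- q ∣ k and p ∣ k + 1
      exfalso
      obtain ⟨a, ha⟩ := hqk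
      obtain ⟨b, hb⟩ := hpk
      have hab : a * b = y' ^ 2 := by
        have h4 : ((p : ℤ) * q) * (a * b) = ((p : ℤ) * q) * y' ^ 2 := by
          rw [hNdef] at hkk
          rw [← hkk, hb, ha]; ring
        exact mul_left_cancel₀ (by positivity) h4
      have ha0 : 0 < a := pos_factor hq0 (by rw [← ha]; exact hk0)
      have hb0 : 0 < b := pos_factor hp0 (by rw [← hb]; exact hk10)
      have habco : IsCoprime a b :=
        (hkco.of_isCoprime_of_dvd_left ⟨(q : ℤ), by rw [ha]; ring⟩).of_isCoprime_of_dvd_right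
          ⟨(p : ℤ), by rw [hb]; ring⟩
      obtain ⟨u, hu⟩ := sq_of_coprime_pos habco hab ha0
      obtain ⟨v, hv⟩ := sq_of_coprime_pos habco.symm (by rw [mul_comm]; exact hab) hb0
      -- p v^2 - q u^2 = 1
      have heq1 : (p : ℤ) * v ^ 2 - (q : ℤ) * u ^ 2 = 1 := by
        rw [← hv, ← hu, ← hb, ← ha]; ring
      have hc := congrArg (fun z : ℤ => (z : ZMod q)) heq1
      push_cast at hc
      rw [ZMod.natCast_self] at hc
      have hpc : ((p : ℕ) : ZMod q) * ((v : ℤ) : ZMod q) ^ 2 = 1 := by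
        linear_combination hc
      have hv0 : ((v : ℤ) : ZMod q) ≠ 0 := by
        rw [Ne, ZMod.intCast_zmod_eq_zero_iff_dvd]
        intro hdvd
        have h1 : (q : ℤ) ∣ k + 1 := by
          rw [hb, hv]
          exact ((dvd_pow hdvd two_ne_zero).mul_left _)
        have h2 : (q : ℤ) ∣ 1 := by simpa using dvd_sub h1 ⟨a, ha⟩
        have h3 := Int.le_of_dvd one_pos h2
        omega
      exact hlegcon v hv0 1 IsSquare.one hpc
    · -- p ∣ k + 1 and q ∣ k + 1 : the -1 equation has a solution!
      have hNk : N ∣ k + 1 := by rw [hNdef]; exact hpqco.mul_dvd hpk hqk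
      obtain ⟨b, hb⟩ := hNk
      have hab : k * b = y' ^ 2 := by
        have h4 : N * (k * b) = N * y' ^ 2 := by rw [← hkk, hb]; ring
        exact mul_left_cancel₀ (by linarith) h4
      have hb0 : 0 < b := pos_factor hN0 (by rw [← hb]; exact hk10)
      have habco : IsCoprime k b :=
        hkco.of_isCoprime_of_dvd_right ⟨N, by rw [hb]; ring⟩
      obtain ⟨u, hu⟩ := sq_of_coprime_pos habco hab hk0
      obtain ⟨v, hv⟩ := sq_of_coprime_pos habco.symm (by rw [mul_comm]; exact hab) hb0
      refine ⟨u, v, ?_⟩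
      rw [← hu, ← hv]
      linear_combination hb
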